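/- For the same choice of sign ± throughout, the t-deformed K-theoretic monopole operators satisfy, for all i, j ∈ {1,…,N} and all α, β ∈ {0,…,ℓ−1}: {u_i^{α±}, u_j^{β±}} = ±(1 − δ_{ij}δ^{αβ}) κ^{αβ} u_i^{α±} u_j^{β±} · C^{αβ}_{ij}, where C^{αβ}_{ij} = (1/2)(Q_i^ℓ + Q_j^{ℓ−1})/(Q_i^ℓ − Q_j^{ℓ−1}) if (α,β) = (0, ℓ−1), C^{αβ}_{ij} = (1/2)(Q_i^{ℓ−1} + Q_j^ℓ)/(Q_i^{ℓ−1} − Q_j^ℓ) if (α,β) = (ℓ−1, 0), and C^{αβ}_{ij} = (1/2)(Q_i^α + Q_j^β)/(Q_i^α − Q_j^β) otherwise. -/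

import Mathlib

open Real Finset Matrix Kronecker

namespace SpinRSK

/-- Phase space: `x`-coordinates and `p`-coordinates indexed by (particle, node). -/
abbrev M (N : ℕ) : Type := ((Fin N × ℕ) → ℝ) × ((Fin N × ℕ) → ℝ)

/-- Extended coordinate `x_i^α`, satisfying `x_i^{α+ℓ} = x_i^α + log t`. -/
noncomputable def xc (N ℓ : ℕ) (t : ℝ) (i : Fin N) (α : ℤ) (x : M N) : ℝ :=
  x.1 (i, (α % (ℓ : ℤ)).toNat) + Real.log t * ((α / (ℓ : ℤ) : ℤ) : ℝ)

/-- `Q_i^α = exp(x_i^α)`, satisfying `Q_i^{α+ℓ} = t Q_i^α`. -/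
noncomputable def Q (N ℓ : ℕ) (t : ℝ) (i : Fin N) (α : ℤ) (x : M N) : ℝ :=
  Real.exp (xc N ℓ t i α x)

/-- Extended momentum coordinate `p_i^α`, satisfying `p_i^{α+ℓ} = p_i^α`. -/
def p (N ℓ : ℕ) (i : Fin N) (α : ℤ) (x : M N) : ℝ :=
  x.2 (i, (α % (ℓ : ℤ)).toNat)

/-- Partial derivative with respect to the coordinate `x_i^a`, `0 ≤ a < ℓ`. -/
noncomputable def pdx (N : ℕ) (i : Fin N) (a : ℕ) (f : M N → ℝ) (x : M N) : ℝ :=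
  deriv (fun s : ℝ => f (Function.update x.1 (i, a) s, x.2)) (x.1 (i, a))

/-- Partial derivative with respect to the coordinate `p_i^a`, `0 ≤ a < ℓ`. -/
noncomputable def pdp (N : ℕ) (i : Fin N) (a : ℕ) (f : M N → ℝ) (x : M N) : ℝ :=
  deriv (fun s : ℝ => f (x.1, Function.update x.2 (i, a) s)) (x.2 (i, a))

/-- The Poisson bracket `{f, g}`. -/
noncomputable def Pb (N ℓ : ℕ) (f g : M N → ℝ) (x : M N) : ℝ :=
  ∑ i : Fin N, ∑ a ∈ Finset.range ℓ,
    (pdx N i a f x * pdp N i a g x - pdp N i a f x * pdx N i a g x)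

/-- The open set `U` where the extended coordinates are pairwise distinct. -/
def U (N ℓ : ℕ) (t : ℝ) : Set (M N) :=
  {x | ∀ (i j : Fin N) (α β : ℤ), 0 ≤ α → α ≤ ℓ → 0 ≤ β → β ≤ ℓ →
    (i, α) ≠ (j, β) → xc N ℓ t i α x ≠ xc N ℓ t j β x}

/-- The K-theoretic gauge polynomial `χ^α(z)`. -/
noncomputable def chi (N ℓ : ℕ) (t : ℝ) (α : ℤ) (z : ℝ) (x : M N) : ℝ :=
  ∏ i : Fin N, (Real.sqrt (z / Q N ℓ t i α x) - Real.sqrt (Q N ℓ t i α x / z))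

/-- The t-deformed K-theoretic monopole operator `u_i^{α,s}` (`s = ±1`). -/
noncomputable def u (N ℓ : ℕ) (t : ℝ) (s : ℤ) (i : Fin N) (α : ℤ) (x : M N) : ℝ :=
  Real.exp ((s : ℝ) * p N ℓ i α x) * chi N ℓ t (α + s) (Q N ℓ t i α x) x /
    ∏ j ∈ Finset.univ.erase i,
      (Real.sqrt (Q N ℓ t i α x / Q N ℓ t j α x) -
        Real.sqrt (Q N ℓ t j α x / Q N ℓ t i α x))

/-- Kronecker delta modulo `ℓ`. -/
def dmod (ℓ : ℕ) (α β : ℤ) : ℝ := if α % (ℓ : ℤ) = β % (ℓ : ℤ) then 1 else 0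

/-- The Cartan matrix `κ^{αβ}` of the necklace quiver. -/
def kappa (ℓ : ℕ) (α β : ℤ) : ℝ :=
  2 * dmod ℓ α β - dmod ℓ (α + 1) β - dmod ℓ α (β + 1)

/-- One-site `L`-operator `L^α` as a matrix-valued function. -/
noncomputable def Lmat (N ℓ : ℕ) (t : ℝ) (α : ℤ) (x : M N) :
    Matrix (Fin N) (Fin N) ℝ :=
  Matrix.of fun i j =>
    u N ℓ t 1 j (α + 1) x / (1 - Q N ℓ t j (α + 1) x / Q N ℓ t i α x)

/-- The ordered product `L^α L^{α+1} ⋯ L^{α+n-1}`. -/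
noncomputable def prodL (N ℓ : ℕ) (t : ℝ) (α : ℤ) (n : ℕ) (x : M N) :
    Matrix (Fin N) (Fin N) ℝ :=
  ((List.range n).map (fun k => Lmat N ℓ t (α + (k : ℤ)) x)).prod

/-- The total `L`-operator `L = L^0 L^1 ⋯ L^{ℓ-1}`. -/
noncomputable def Ltot (N ℓ : ℕ) (t : ℝ) (x : M N) : Matrix (Fin N) (Fin N) ℝ :=
  prodL N ℓ t 0 ℓ x

/-- The Hamiltonians `H[n] = Tr(L^n)`. -/
noncomputable def Ham (N ℓ : ℕ) (t : ℝ) (n : ℕ) (x : M N) : ℝ :=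
  Matrix.trace (Ltot N ℓ t x ^ n)

/-- The matrix Poisson bracket `{A₁, B₂}` in `End(ℝ^N) ⊗ End(ℝ^N)`. -/
noncomputable def PbMat (N ℓ : ℕ) (A B : M N → Matrix (Fin N) (Fin N) ℝ) (x : M N) :
    Matrix (Fin N × Fin N) (Fin N × Fin N) ℝ :=
  Matrix.of fun ik jl => Pb N ℓ (fun y => A y ik.1 jl.1) (fun y => B y ik.2 jl.2) x

/-- Matrix unit `e_{ij}`. -/
noncomputable def Eu (N : ℕ) (i j : Fin N) : Matrix (Fin N) (Fin N) ℝ :=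
  Matrix.single i j 1

/-- The matrix `r^α`. -/
noncomputable def rmat (N ℓ : ℕ) (t : ℝ) (α : ℤ) (x : M N) :
    Matrix (Fin N × Fin N) (Fin N × Fin N) ℝ :=
  ∑ i : Fin N, ∑ j ∈ Finset.univ.erase i,
    ((1 / (Q N ℓ t i α x / Q N ℓ t j α x - 1)) • Eu N i i
      - (1 / (1 - Q N ℓ t j α x / Q N ℓ t i α x)) • Eu N i j) ⊗ₖ (Eu N j j - Eu N j i)

/-- The matrix `r̄^α` (shifted by `-1/2`). -/
noncomputable def rbar (N ℓ : ℕ) (t : ℝ) (α : ℤ) (x : M N) :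
    Matrix (Fin N × Fin N) (Fin N × Fin N) ℝ :=
  (∑ i : Fin N, ∑ j ∈ Finset.univ.erase i,
    (1 / (1 - Q N ℓ t j α x / Q N ℓ t i α x)) • ((Eu N i i - Eu N i j) ⊗ₖ Eu N j j))
  - (1 / 2 : ℝ) • ((1 : Matrix (Fin N) (Fin N) ℝ) ⊗ₖ (1 : Matrix (Fin N) (Fin N) ℝ))

/-- The matrix `r̲^α`. -/
noncomputable def runder (N ℓ : ℕ) (t : ℝ) (α : ℤ) (x : M N) :
    Matrix (Fin N × Fin N) (Fin N × Fin N) ℝ :=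
  ∑ i : Fin N, ∑ j ∈ Finset.univ.erase i,
    (1 / (1 - Q N ℓ t j α x / Q N ℓ t i α x)) •
      (Eu N i j ⊗ₖ Eu N j i - Eu N i i ⊗ₖ Eu N j j)

/-- Swap of the two tensor factors of `End(ℝ^N) ⊗ End(ℝ^N)`. -/
def swapT (N : ℕ) (R : Matrix (Fin N × Fin N) (Fin N × Fin N) ℝ) :
    Matrix (Fin N × Fin N) (Fin N × Fin N) ℝ :=
  Matrix.of fun ik jl => R (ik.2, ik.1) (jl.2, jl.1)

/-- The zero mode `E^α = Σ_i u_i^{α,+}`. -/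
noncomputable def Egen (N ℓ : ℕ) (t : ℝ) (α : ℤ) (x : M N) : ℝ :=
  ∑ i : Fin N, u N ℓ t 1 i α x

/-- The zero mode `F^α = Σ_i u_i^{α,-}`. -/
noncomputable def Fgen (N ℓ : ℕ) (t : ℝ) (α : ℤ) (x : M N) : ℝ :=
  ∑ i : Fin N, u N ℓ t (-1) i α x

/-- The Cartan zero mode `K^α = Π_i Q_i^α (Q_i^{α+1} Q_i^{α-1})^{-1/2}`. -/
noncomputable def Kcar (N ℓ : ℕ) (t : ℝ) (α : ℤ) (x : M N) : ℝ :=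
  ∏ i : Fin N, Q N ℓ t i α x / Real.sqrt (Q N ℓ t i (α + 1) x * Q N ℓ t i (α - 1) x)

/-- Generating series `e^α(z)`. -/
noncomputable def egens (N ℓ : ℕ) (t : ℝ) (α : ℤ) (z : ℝ) (x : M N) : ℝ :=
  ∑ i : Fin N, u N ℓ t 1 i α x / (1 - Q N ℓ t i α x / z)

/-- Generating series `f^α(z)`. -/
noncomputable def fgens (N ℓ : ℕ) (t : ℝ) (α : ℤ) (z : ℝ) (x : M N) : ℝ :=
  ∑ i : Fin N, u N ℓ t (-1) i α x / (1 - Q N ℓ t i α x / z)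

/-- The series `χ̃^α(z) = Π_i (1 - Q_i^α/z)`. -/
noncomputable def chit (N ℓ : ℕ) (t : ℝ) (α : ℤ) (z : ℝ) (x : M N) : ℝ :=
  ∏ i : Fin N, (1 - Q N ℓ t i α x / z)

/-- The series `h^α(z)`. -/
noncomputable def hgens (N ℓ : ℕ) (t : ℝ) (α : ℤ) (z : ℝ) (x : M N) : ℝ :=
  chit N ℓ t (α + 1) z x * chit N ℓ t (α - 1) z x / (chit N ℓ t α z x) ^ 2 *
    ∏ i : Fin N, Q N ℓ t i α x / Real.sqrt (Q N ℓ t i (α + 1) x * Q N ℓ t i (α - 1) x)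

/-- The modified one-site operator `L̃^α = (Q^α)⁻¹ L^α Q^{α+1}`. -/
noncomputable def Ltil (N ℓ : ℕ) (t : ℝ) (α : ℤ) (x : M N) :
    Matrix (Fin N) (Fin N) ℝ :=
  Matrix.of fun i j => Lmat N ℓ t α x i j * Q N ℓ t j (α + 1) x / Q N ℓ t i α x

/-- The ordered product `L̃^α L̃^{α+1} ⋯ L̃^{α+n-1}`. -/
noncomputable def prodLtil (N ℓ : ℕ) (t : ℝ) (α : ℤ) (n : ℕ) (x : M N) :
    Matrix (Fin N) (Fin N) ℝ :=
  ((List.range n).map (fun k => Ltil N ℓ t (α + (k : ℤ)) x)).prod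

/-- The spin variables `a_i^α = (L^0 ⋯ L^{α-2} e)_i`, `α ∈ {1,…,ℓ}`. -/
noncomputable def aspin (N ℓ : ℕ) (t : ℝ) (α : ℤ) (x : M N) (i : Fin N) : ℝ :=
  ∑ j : Fin N, prodL N ℓ t 0 (α - 1).toNat x i j

/-- The spin variables `c_j^α = (u^{α,+} L̃^α ⋯ L̃^{ℓ-1})_j`, `α ∈ {1,…,ℓ}`. -/
noncomputable def cspin (N ℓ : ℕ) (t : ℝ) (α : ℤ) (x : M N) (j : Fin N) : ℝ :=
  ∑ i : Fin N, u N ℓ t 1 i α x * prodLtil N ℓ t α ((ℓ : ℤ) - α).toNat x i j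


lemma sqrt_exp_div (a b : ℝ) : Real.sqrt (Real.exp a / Real.exp b) = Real.exp ((a-b)/2) := by
  have h : Real.exp (a - b) = Real.exp ((a-b)/2) ^ 2 := by
    rw [sq, ← Real.exp_add]; ring_nf
  rw [← Real.exp_sub, h, Real.sqrt_sq (Real.exp_pos _).le]

/-- `G2 a b = 2 sinh((a-b)/2)`. -/
noncomputable def G2 (a b : ℝ) : ℝ := Real.exp ((a-b)/2) - Real.exp ((b-a)/2)

lemma G2ne (a b : ℝ) (h : a ≠ b) : G2 a b ≠ 0 := by
  refine sub_ne_zero_of_ne fun he => h ?_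
  have := Real.exp_eq_exp.mp he
  linarith

lemma coth_eq (a b : ℝ) (h : a ≠ b) :
    (Real.exp ((a-b)/2) + Real.exp ((b-a)/2)) / G2 a b
      = (Real.exp a + Real.exp b) / (Real.exp a - Real.exp b) := by
  have h1 := G2ne a b h
  have h2 : Real.exp a - Real.exp b ≠ 0 :=
    sub_ne_zero_of_ne fun he => h (Real.exp_eq_exp.mp he)
  rw [G2] at h1 ⊢
  rw [div_eq_div_iff h1 h2]
  have ea : Real.exp a = Real.exp ((a-b)/2) * Real.exp ((a+b)/2) := by
    rw [← Real.exp_add]; ring_nf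
  have eb : Real.exp b = Real.exp ((b-a)/2) * Real.exp ((a+b)/2) := by
    rw [← Real.exp_add]; ring_nf
  rw [ea, eb]; ring

/-- `u` rewritten via `G2` and `xc`. -/
lemma u_eq (N ℓ : ℕ) (t : ℝ) (s : ℤ) (m : Fin N) (γ : ℤ) (y : M N) :
    u N ℓ t s m γ y =
      Real.exp ((s : ℝ) * p N ℓ m γ y) *
        (∏ r : Fin N, G2 (xc N ℓ t m γ y) (xc N ℓ t r (γ+s) y)) /
      (∏ r ∈ Finset.univ.erase m, G2 (xc N ℓ t m γ y) (xc N ℓ t r γ y)) := by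
  simp only [u, chi, Q, sqrt_exp_div, G2]

lemma xc_upd (N ℓ : ℕ) (t : ℝ) (m : Fin N) (γ : ℤ) (x : M N) (c : Fin N × ℕ) (v : ℝ) :
    xc N ℓ t m γ (Function.update x.1 c v, x.2) =
      (if (m, (γ % (ℓ:ℤ)).toNat) = c then v else x.1 (m, (γ % (ℓ:ℤ)).toNat))
        + Real.log t * ((γ / (ℓ:ℤ) : ℤ) : ℝ) := by
  simp [xc, Function.update_apply]

lemma xc_upd_ne (N ℓ : ℕ) (t : ℝ) (m : Fin N) (γ : ℤ) (x : M N) (c : Fin N × ℕ) (v : ℝ)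
    (h : (m, (γ % (ℓ:ℤ)).toNat) ≠ c) :
    xc N ℓ t m γ (Function.update x.1 c v, x.2) = xc N ℓ t m γ x := by
  rw [xc_upd, if_neg h]; rfl

lemma xc_in (N ℓ : ℕ) (t : ℝ) (m : Fin N) (γ : ℤ) (hγ : 0 ≤ γ) (hγ' : γ < ℓ) (x : M N) :
    xc N ℓ t m γ x = x.1 (m, γ.toNat) := by
  have h1 : γ % (ℓ:ℤ) = γ := Int.emod_eq_of_lt hγ hγ'
  have h2 : γ / (ℓ:ℤ) = 0 := Int.ediv_eq_zero_of_lt hγ hγ'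
  simp [xc, h1, h2]

lemma xc_shift (N ℓ : ℕ) (hℓ : 0 < ℓ) (t : ℝ) (m : Fin N) (γ : ℤ) (x : M N) :
    xc N ℓ t m (γ + ℓ) x = xc N ℓ t m γ x + Real.log t := by
  have h0 : (ℓ:ℤ) ≠ 0 := by exact_mod_cast hℓ.ne'
  have h1 : (γ + (ℓ:ℤ)) % (ℓ:ℤ) = γ % (ℓ:ℤ) := by
    have : γ + (ℓ:ℤ) = γ + (ℓ:ℤ) * 1 := by ring
    rw [this, Int.add_mul_emod_self_left]
  have h2 : (γ + (ℓ:ℤ)) / (ℓ:ℤ) = γ / (ℓ:ℤ) + 1 := by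
    have := Int.add_mul_ediv_right γ 1 h0
    simpa using this
  rw [xc, xc, h1, h2]
  push_cast
  ring

lemma u_p2 (N ℓ : ℕ) (t : ℝ) (s : ℤ) (m : Fin N) (γ : ℤ) (x : M N) (y : (Fin N × ℕ) → ℝ) :
    u N ℓ t s m γ (x.1, y) =
      Real.exp ((s:ℝ) * (y (m, (γ % (ℓ:ℤ)).toNat) - x.2 (m, (γ % (ℓ:ℤ)).toNat))) *
        u N ℓ t s m γ x := by
  have hQ : ∀ (i : Fin N) (α : ℤ), Q N ℓ t i α (x.1, y) = Q N ℓ t i α x := fun _ _ => rfl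
  have hchi : ∀ (δ : ℤ) (z : ℝ), chi N ℓ t δ z (x.1, y) = chi N ℓ t δ z x := fun _ _ => rfl
  rw [u, u, p, p, hchi, hQ]
  simp only [hQ]
  have he : Real.exp ((s:ℝ) * y (m, (γ % (ℓ:ℤ)).toNat)) =
      Real.exp ((s:ℝ) * (y (m, (γ % (ℓ:ℤ)).toNat) - x.2 (m, (γ % (ℓ:ℤ)).toNat))) *
        Real.exp ((s:ℝ) * x.2 (m, (γ % (ℓ:ℤ)).toNat)) := by
    rw [← Real.exp_add]; ring_nf
  rw [he]; ring

lemma pdp_u (N ℓ : ℕ) (t : ℝ) (s : ℤ) (m : Fin N) (γ : ℤ) (x : M N) (k : Fin N) (a : ℕ) :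
    pdp N k a (u N ℓ t s m γ) x =
      if (m, (γ % (ℓ:ℤ)).toNat) = (k, a) then (s:ℝ) * u N ℓ t s m γ x else 0 := by
  rw [pdp]
  by_cases h : (m, (γ % (ℓ:ℤ)).toNat) = (k, a)
  · rw [if_pos h]
    have hfun : (fun v => u N ℓ t s m γ (x.1, Function.update x.2 (k,a) v)) =
        fun v => Real.exp ((s:ℝ) * (v - x.2 (k,a))) * u N ℓ t s m γ x := by
      funext v
      rw [u_p2, h, Function.update_self]
    rw [hfun]
    have hv : HasDerivAt (fun v : ℝ => (s:ℝ) * (v - x.2 (k,a))) (s:ℝ) (x.2 (k,a)) := by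
      simpa using (((hasDerivAt_id (x.2 (k,a))).sub_const (x.2 (k,a))).const_mul (s:ℝ))
    have := (hv.exp.mul_const (u N ℓ t s m γ x)).deriv
    rw [this]
    simp
  · rw [if_neg h]
    have hfun : (fun v => u N ℓ t s m γ (x.1, Function.update x.2 (k,a) v)) =
        fun _ => u N ℓ t s m γ x := by
      funext v
      rw [u_p2, Function.update_of_ne h]
      simp
    rw [hfun, deriv_const]

lemma pick (N ℓ : ℕ) (F : Fin N → ℕ → ℝ) (j : Fin N) (b : ℕ) (hb : b < ℓ) :
    ∑ k : Fin N, ∑ a ∈ Finset.range ℓ, (if (j, b) = (k, a) then F k a else 0) = F j b := by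
  rw [Finset.sum_eq_single j]
  · rw [Finset.sum_eq_single b]
    · simp
    · intro a _ ha
      exact if_neg (by simp [ha.symm])
    · intro hb'
      exact absurd (Finset.mem_range.mpr hb) hb'
  · intro k _ hk
    exact Finset.sum_eq_zero fun a _ => if_neg fun h => hk (congrArg Prod.fst h).symm
  · simp

lemma Pb_collapse (N ℓ : ℕ) (t : ℝ) (s : ℤ) (i j : Fin N) (α β : ℤ)
    (hα : 0 ≤ α) (hα' : α < ℓ) (hβ : 0 ≤ β) (hβ' : β < ℓ) (x : M N) :
    Pb N ℓ (u N ℓ t s i α) (u N ℓ t s j β) x =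
      pdx N j β.toNat (u N ℓ t s i α) x * ((s:ℝ) * u N ℓ t s j β x) -
        ((s:ℝ) * u N ℓ t s i α x) * pdx N i α.toNat (u N ℓ t s j β) x := by
  have hαm : α % (ℓ:ℤ) = α := Int.emod_eq_of_lt hα hα'
  have hβm : β % (ℓ:ℤ) = β := Int.emod_eq_of_lt hβ hβ'
  rw [Pb]
  have hsum : ∀ (k : Fin N) (a : ℕ),
      pdx N k a (u N ℓ t s i α) x * pdp N k a (u N ℓ t s j β) x -
        pdp N k a (u N ℓ t s i α) x * pdx N k a (u N ℓ t s j β) x =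
      (if (j, β.toNat) = (k, a) then pdx N k a (u N ℓ t s i α) x * ((s:ℝ) * u N ℓ t s j β x) else 0)
      - (if (i, α.toNat) = (k, a) then ((s:ℝ) * u N ℓ t s i α x) * pdx N k a (u N ℓ t s j β) x else 0) := by
    intro k a
    rw [pdp_u, pdp_u, hαm, hβm]
    by_cases h1 : (j, β.toNat) = (k, a) <;> by_cases h2 : (i, α.toNat) = (k, a) <;>
      simp [h1, h2, mul_comm]
  simp only [hsum, Finset.sum_sub_distrib]
  congr 1
  · exact pick N ℓ _ j β.toNat (by omega)
  · exact pick N ℓ _ i α.toNat (by omega)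

lemma mod_toNat_ne (ℓ : ℕ) (hℓ : 3 ≤ ℓ) (s : ℤ) (hs : s = 1 ∨ s = -1) (γ : ℤ)
    (hγ : 0 ≤ γ) (hγ' : γ < ℓ) : ((γ + s) % (ℓ:ℤ)).toNat ≠ γ.toNat := by
  rcases hs with rfl | rfl
  · by_cases h : γ + 1 < (ℓ:ℤ)
    · rw [Int.emod_eq_of_lt (by omega) h]; omega
    · have hγℓ : γ + 1 = (ℓ:ℤ) := by omega
      rw [hγℓ, Int.emod_self]; omega
  · have hh : γ + (-1) = γ - 1 := by ring
    rw [hh]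
    by_cases h : 0 ≤ γ - 1
    · rw [Int.emod_eq_of_lt h (by omega)]; omega
    · have hγ0 : γ = 0 := by omega
      have hmod : (γ - 1) % (ℓ:ℤ) = (ℓ:ℤ) - 1 := by
        rw [hγ0]
        have h1 : (0 - 1 : ℤ) = ((ℓ:ℤ) - 1) + (ℓ:ℤ) * (-1) := by ring
        rw [h1, Int.add_mul_emod_self_left, Int.emod_eq_of_lt (by omega) (by omega)]
      rw [hmod]; omega

lemma pdx_C (N ℓ : ℕ) (t : ℝ) (s : ℤ) (k m : Fin N) (γ : ℤ)
    (hγ : 0 ≤ γ) (hγ' : γ < ℓ) (x : M N) (a : ℕ)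
    (ha : a ≠ γ.toNat) (ha' : a ≠ ((γ + s) % (ℓ:ℤ)).toNat) :
    pdx N k a (u N ℓ t s m γ) x = 0 := by
  have hγm : γ % (ℓ:ℤ) = γ := Int.emod_eq_of_lt hγ hγ'
  rw [pdx]
  have hfun : (fun v => u N ℓ t s m γ (Function.update x.1 (k, a) v, x.2)) =
      fun _ => u N ℓ t s m γ x := by
    funext v
    rw [u_eq, u_eq]
    have hp : p N ℓ m γ (Function.update x.1 (k, a) v, x.2) = p N ℓ m γ x := rfl
    have h1 : ∀ r : Fin N, xc N ℓ t r γ (Function.update x.1 (k, a) v, x.2) = xc N ℓ t r γ x := by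
      intro r
      refine xc_upd_ne _ _ _ _ _ _ _ _ fun h => ha ?_
      have := congrArg Prod.snd h
      rw [hγm] at this
      exact this.symm
    have h2 : ∀ r : Fin N, xc N ℓ t r (γ + s) (Function.update x.1 (k, a) v, x.2)
        = xc N ℓ t r (γ + s) x := by
      intro r
      refine xc_upd_ne _ _ _ _ _ _ _ _ fun h => ha' ?_
      exact (congrArg Prod.snd h).symm
    rw [hp]
    simp only [h1, h2]
  rw [hfun, deriv_const]

lemma pdx_A (N ℓ : ℕ) (hℓ : 3 ≤ ℓ) (t : ℝ) (s : ℤ) (hs : s = 1 ∨ s = -1)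
    (k m : Fin N) (hkm : k ≠ m) (γ : ℤ) (hγ : 0 ≤ γ) (hγ' : γ < ℓ) (x : M N)
    (hne : xc N ℓ t m γ x ≠ xc N ℓ t k γ x) :
    pdx N k γ.toNat (u N ℓ t s m γ) x =
      u N ℓ t s m γ x * ((1/2) *
        ((Real.exp (xc N ℓ t m γ x) + Real.exp (xc N ℓ t k γ x)) /
          (Real.exp (xc N ℓ t m γ x) - Real.exp (xc N ℓ t k γ x)))) := by
  have hγm : γ % (ℓ:ℤ) = γ := Int.emod_eq_of_lt hγ hγ'
  have hγd : γ / (ℓ:ℤ) = 0 := Int.ediv_eq_zero_of_lt hγ hγ'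
  have hsne := mod_toNat_ne ℓ hℓ s hs γ hγ hγ'
  set cm := xc N ℓ t m γ x with hcm
  set ck := xc N ℓ t k γ x with hck
  have hkD : k ∈ Finset.univ.erase m := Finset.mem_erase.mpr ⟨hkm, Finset.mem_univ k⟩
  set CC := Real.exp ((s:ℝ) * p N ℓ m γ x) * (∏ r : Fin N, G2 cm (xc N ℓ t r (γ+s) x)) /
      (∏ r ∈ (Finset.univ.erase m).erase k, G2 cm (xc N ℓ t r γ x)) with hCC
  have hfun : (fun v => u N ℓ t s m γ (Function.update x.1 (k, γ.toNat) v, x.2)) =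
      fun v => CC / G2 cm v := by
    funext v
    rw [u_eq]
    have hp : p N ℓ m γ (Function.update x.1 (k, γ.toNat) v, x.2) = p N ℓ m γ x := rfl
    have hB : xc N ℓ t m γ (Function.update x.1 (k, γ.toNat) v, x.2) = cm := by
      refine xc_upd_ne _ _ _ _ _ _ _ _ fun h => hkm ?_
      exact (congrArg Prod.fst h).symm
    have hA : ∀ r : Fin N, xc N ℓ t r (γ+s) (Function.update x.1 (k, γ.toNat) v, x.2)
        = xc N ℓ t r (γ+s) x := by
      intro r
      refine xc_upd_ne _ _ _ _ _ _ _ _ fun h => hsne ?_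
      exact congrArg Prod.snd h
    have hC : xc N ℓ t k γ (Function.update x.1 (k, γ.toNat) v, x.2) = v := by
      rw [xc_upd, if_pos (by rw [hγm]), hγd]
      simp
    have hprod : ∏ r ∈ (Finset.univ.erase m).erase k,
        G2 (xc N ℓ t m γ (Function.update x.1 (k, γ.toNat) v, x.2))
          (xc N ℓ t r γ (Function.update x.1 (k, γ.toNat) v, x.2)) =
        ∏ r ∈ (Finset.univ.erase m).erase k, G2 cm (xc N ℓ t r γ x) := by
      refine Finset.prod_congr rfl fun r hr => ?_
      have hrk : r ≠ k := (Finset.mem_erase.mp hr).1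
      rw [hB]
      congr 1
      refine xc_upd_ne _ _ _ _ _ _ _ _ fun h => hrk ?_
      exact congrArg Prod.fst h
    rw [← Finset.mul_prod_erase _ _ hkD, hprod, hp]
    simp only [hA, hB, hC]
    rw [hCC]
    ring
  rw [pdx, hfun]
  have hv0 : x.1 (k, γ.toNat) = ck := (xc_in N ℓ t k γ hγ hγ' x).symm
  rw [hv0]
  have e1 : HasDerivAt (fun v : ℝ => (cm - v)/2) (-(1/2)) ck := by
    have := ((hasDerivAt_id ck).const_sub cm).div_const 2
    exact this.congr_deriv (by norm_num)
  have e2 : HasDerivAt (fun v : ℝ => (v - cm)/2) (1/2) ck :=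
    ((hasDerivAt_id ck).sub_const cm).div_const 2
  have hGd : HasDerivAt (fun v => G2 cm v)
      (-(1/2) * (Real.exp ((cm-ck)/2) + Real.exp ((ck-cm)/2))) ck := by
    have := (e1.exp).sub (e2.exp)
    exact this.congr_deriv (by ring)
  have hGne : G2 cm ck ≠ 0 := G2ne cm ck hne
  have hdiv := (hasDerivAt_const ck CC).fun_div hGd hGne
  rw [hdiv.deriv]
  have hu : u N ℓ t s m γ x = CC / G2 cm ck := by
    have h0 := congrFun hfun (x.1 (k, γ.toNat))
    rw [Function.update_eq_self, hv0] at h0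
    exact h0
  rw [hu, ← coth_eq cm ck hne]
  field_simp
  ring

lemma pdx_B (N ℓ : ℕ) (hℓ : 3 ≤ ℓ) (t : ℝ) (s : ℤ) (hs : s = 1 ∨ s = -1)
    (k m : Fin N) (γ : ℤ) (hγ : 0 ≤ γ) (hγ' : γ < ℓ) (x : M N)
    (hne : xc N ℓ t m γ x ≠ xc N ℓ t k (γ + s) x) :
    pdx N k ((γ + s) % (ℓ:ℤ)).toNat (u N ℓ t s m γ) x =
      u N ℓ t s m γ x * (-(1/2) *
        ((Real.exp (xc N ℓ t m γ x) + Real.exp (xc N ℓ t k (γ + s) x)) /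
          (Real.exp (xc N ℓ t m γ x) - Real.exp (xc N ℓ t k (γ + s) x)))) := by
  have hγm : γ % (ℓ:ℤ) = γ := Int.emod_eq_of_lt hγ hγ'
  have hsne := mod_toNat_ne ℓ hℓ s hs γ hγ hγ'
  set a := ((γ + s) % (ℓ:ℤ)).toNat with hadef
  set L := Real.log t * (((γ + s) / (ℓ:ℤ) : ℤ) : ℝ) with hL
  set cm := xc N ℓ t m γ x with hcm
  set ck := xc N ℓ t k (γ + s) x with hck
  set CC := Real.exp ((s:ℝ) * p N ℓ m γ x) *
      (∏ r ∈ Finset.univ.erase k, G2 cm (xc N ℓ t r (γ+s) x)) /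
      (∏ r ∈ Finset.univ.erase m, G2 cm (xc N ℓ t r γ x)) with hCC
  have hfun : (fun v => u N ℓ t s m γ (Function.update x.1 (k, a) v, x.2)) =
      fun v => CC * G2 cm (v + L) := by
    funext v
    rw [u_eq]
    have hp : p N ℓ m γ (Function.update x.1 (k, a) v, x.2) = p N ℓ m γ x := rfl
    have hB : ∀ r : Fin N, xc N ℓ t r γ (Function.update x.1 (k, a) v, x.2)
        = xc N ℓ t r γ x := by
      intro r
      refine xc_upd_ne _ _ _ _ _ _ _ _ fun h => hsne ?_
      have := congrArg Prod.snd h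
      rw [hγm] at this
      exact this.symm
    have hk' : xc N ℓ t k (γ + s) (Function.update x.1 (k, a) v, x.2) = v + L := by
      rw [xc_upd, if_pos rfl]
    have hnum : ∏ r : Fin N,
        G2 (xc N ℓ t m γ (Function.update x.1 (k, a) v, x.2))
          (xc N ℓ t r (γ + s) (Function.update x.1 (k, a) v, x.2)) =
        G2 cm (v + L) * ∏ r ∈ Finset.univ.erase k, G2 cm (xc N ℓ t r (γ+s) x) := by
      rw [← Finset.mul_prod_erase _ _ (Finset.mem_univ k), hk', hB m]
      congr 1
      refine Finset.prod_congr rfl fun r hr => ?_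
      have hrk : r ≠ k := (Finset.mem_erase.mp hr).1
      congr 1
      refine xc_upd_ne _ _ _ _ _ _ _ _ fun h => hrk ?_
      exact congrArg Prod.fst h
    rw [hnum, hp]
    simp only [hB]
    rw [hCC]
    ring
  rw [pdx, hfun]
  have hv0 : x.1 (k, a) + L = ck := rfl
  have e1 : HasDerivAt (fun v : ℝ => (cm - (v + L))/2) (-(1/2)) (x.1 (k, a)) := by
    have := (((hasDerivAt_id (x.1 (k, a))).add_const L).const_sub cm).div_const 2
    exact this.congr_deriv (by norm_num)
  have e2 : HasDerivAt (fun v : ℝ => ((v + L) - cm)/2) (1/2) (x.1 (k, a)) :=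
    (((hasDerivAt_id (x.1 (k, a))).add_const L).sub_const cm).div_const 2
  have hGd : HasDerivAt (fun v => G2 cm (v + L))
      (-(1/2) * (Real.exp ((cm-ck)/2) + Real.exp ((ck-cm)/2))) (x.1 (k, a)) := by
    have h3 := (e1.exp).sub (e2.exp)
    rw [hv0] at h3
    exact h3.congr_deriv (by ring)
  have hd := hGd.const_mul CC
  rw [hd.deriv]
  have hu : u N ℓ t s m γ x = CC * G2 cm ck := by
    have h0 := congrFun hfun (x.1 (k, a))
    rw [Function.update_eq_self, hv0] at h0
    exact h0
  rw [hu, ← coth_eq cm ck hne]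
  have hGne : G2 cm ck ≠ 0 := G2ne cm ck hne
  field_simp

lemma emod_shift (ℓ : ℕ) (δ : ℤ) : (δ + ℓ) % (ℓ:ℤ) = δ % (ℓ:ℤ) := by
  have h : δ + (ℓ:ℤ) = δ + (ℓ:ℤ) * 1 := by ring
  rw [h, Int.add_mul_emod_self_left]

lemma emod_eval (ℓ : ℕ) (hℓ : 0 < ℓ) (δ : ℤ) (h1 : -(ℓ:ℤ) ≤ δ) (h2 : δ < 2*ℓ) :
    δ % (ℓ:ℤ) = if δ < 0 then δ + ℓ else if δ < ℓ then δ else δ - ℓ := by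
  split_ifs with ha hb
  · rw [← emod_shift ℓ δ]
    exact Int.emod_eq_of_lt (by omega) (by omega)
  · exact Int.emod_eq_of_lt (by omega) hb
  · have h3 := emod_shift ℓ (δ - ℓ)
    rw [show δ - (ℓ:ℤ) + ℓ = δ from by ring] at h3
    rw [h3]
    exact Int.emod_eq_of_lt (by omega) (by omega)

lemma kappa_eval (ℓ : ℕ) (hℓ : 3 ≤ ℓ) (α β : ℤ)
    (hα : 0 ≤ α) (hα' : α < ℓ) (hβ : 0 ≤ β) (hβ' : β < ℓ) :
    kappa ℓ α β = (if α = β then 2 else 0)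
      - (if β = α + 1 ∨ (α = (ℓ:ℤ) - 1 ∧ β = 0) then 1 else 0)
      - (if α = β + 1 ∨ (β = (ℓ:ℤ) - 1 ∧ α = 0) then 1 else 0) := by
  have e1 : α % (ℓ:ℤ) = α := Int.emod_eq_of_lt hα hα'
  have e2 : β % (ℓ:ℤ) = β := Int.emod_eq_of_lt hβ hβ'
  have e3 : (α + 1) % (ℓ:ℤ) = if α + 1 < (ℓ:ℤ) then α + 1 else 0 := by
    rw [emod_eval ℓ (by omega) _ (by omega) (by omega)]
    split_ifs <;> omega
  have e4 : (β + 1) % (ℓ:ℤ) = if β + 1 < (ℓ:ℤ) then β + 1 else 0 := by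
    rw [emod_eval ℓ (by omega) _ (by omega) (by omega)]
    split_ifs <;> omega
  simp only [kappa, dmod, e1, e2, e3, e4]
  clear e1 e2 e3 e4
  split_ifs <;> try norm_num
  all_goals omega

lemma hneB (N ℓ : ℕ) (hℓ : 3 ≤ ℓ) (t : ℝ) (s : ℤ) (hs : s = 1 ∨ s = -1)
    (m k : Fin N) (γ : ℤ) (hγ : 0 ≤ γ) (hγ' : γ < ℓ) (x : M N) (hx : x ∈ U N ℓ t) :
    xc N ℓ t m γ x ≠ xc N ℓ t k (γ + s) x := by
  by_cases h : 0 ≤ γ + s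
  · refine hx m k γ (γ+s) hγ (by omega) h (by omega) fun hp => ?_
    have := congrArg Prod.snd hp
    simp only at this
    omega
  · have e1 := xc_shift N ℓ (by omega) t m γ x
    have e2 := xc_shift N ℓ (by omega) t k (γ + s) x
    have hne := hx m k (γ + ℓ) (γ + s + ℓ) (by omega) (by omega) (by omega) (by omega)
      (fun hp => by have := congrArg Prod.snd hp; simp only at this; omega)
    rw [e1, e2] at hne
    intro hcon
    exact hne (by rw [hcon])

set_option maxHeartbeats 1000000 in
/-- Poisson brackets of like-sign t-deformed K-theoretic monopole operators. -/
theorem monopole_bracket_Ktheoretic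
    (N ℓ : ℕ) (hN : 1 ≤ N) (hℓ : 3 ≤ ℓ) (t : ℝ) (ht : 0 < t) (ht' : t ≠ 1)
    (s : ℤ) (hs : s = 1 ∨ s = -1)
    (i j : Fin N) (α β : ℤ) (hα : 0 ≤ α) (hα' : α < ℓ) (hβ : 0 ≤ β) (hβ' : β < ℓ)
    (x : M N) (hx : x ∈ U N ℓ t) :
    Pb N ℓ (u N ℓ t s i α) (u N ℓ t s j β) x =
      (s : ℝ) * (1 - (if i = j then (1 : ℝ) else 0) * (if α = β then (1 : ℝ) else 0)) *
        kappa ℓ α β * u N ℓ t s i α x * u N ℓ t s j β x *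
        (if (α, β) = ((0 : ℤ), (ℓ : ℤ) - 1) then
            (1 / 2) * (Q N ℓ t i ℓ x + Q N ℓ t j ((ℓ : ℤ) - 1) x) /
              (Q N ℓ t i ℓ x - Q N ℓ t j ((ℓ : ℤ) - 1) x)
         else if (α, β) = ((ℓ : ℤ) - 1, (0 : ℤ)) then
            (1 / 2) * (Q N ℓ t i ((ℓ : ℤ) - 1) x + Q N ℓ t j ℓ x) /
              (Q N ℓ t i ((ℓ : ℤ) - 1) x - Q N ℓ t j ℓ x)
         else (1 / 2) * (Q N ℓ t i α x + Q N ℓ t j β x) /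
              (Q N ℓ t i α x - Q N ℓ t j β x)) := by
  by_cases hdiag : i = j ∧ α = β
  · obtain ⟨rfl, rfl⟩ := hdiag
    have hz : Pb N ℓ (u N ℓ t s i α) (u N ℓ t s i α) x = 0 := by
      rw [Pb]
      exact Finset.sum_eq_zero fun k _ => Finset.sum_eq_zero fun a _ => by ring
    rw [hz, if_pos rfl, if_pos rfl]
    ring
  · rw [Pb_collapse N ℓ t s i j α β hα hα' hβ hβ' x,
      kappa_eval ℓ hℓ α β hα hα' hβ hβ']
    by_cases hab : α = β
    · -- same node, different particles
      subst hab
      have hij : i ≠ j := fun h => hdiag ⟨h, rfl⟩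
      have hne1 : xc N ℓ t i α x ≠ xc N ℓ t j α x :=
        hx i j α α hα (by omega) hα (by omega) fun hp => hij (congrArg Prod.fst hp)
      have d1 := pdx_A N ℓ hℓ t s hs j i (Ne.symm hij) α hα hα' x hne1
      have d2 := pdx_A N ℓ hℓ t s hs i j hij α hα hα' x (Ne.symm hne1)
      rw [d1, d2, if_neg hij, if_pos (rfl : α = α), if_pos (rfl : α = α),
        if_neg (by omega : ¬(α = α + 1 ∨ (α = (ℓ:ℤ) - 1 ∧ α = 0))),
        if_neg (by simp only [Prod.mk.injEq, not_and]; omega :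
          ¬((α, α) = ((0:ℤ), (ℓ:ℤ) - 1))),
        if_neg (by simp only [Prod.mk.injEq, not_and]; omega :
          ¬((α, α) = ((ℓ:ℤ) - 1, (0:ℤ))))]
      have hEij : Real.exp (xc N ℓ t i α x) - Real.exp (xc N ℓ t j α x) ≠ 0 :=
        sub_ne_zero_of_ne fun h => hne1 (Real.exp_eq_exp.mp h)
      have hEji : Real.exp (xc N ℓ t j α x) - Real.exp (xc N ℓ t i α x) ≠ 0 :=
        sub_ne_zero_of_ne fun h => hne1 ((Real.exp_eq_exp.mp h).symm)
      simp only [Q]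
      field_simp
      ring
    · -- different nodes
      by_cases h3 : β = α + s ∨ β = α + s - ℓ ∨ β = α + s + ℓ
      · -- β ≡ α + s (mod ℓ)
        have hβmod : (α + s) % (ℓ:ℤ) = β := by
          rw [emod_eval ℓ (by omega) _ (by omega) (by omega)]
          split_ifs <;> omega
        have hne1 : xc N ℓ t i α x ≠ xc N ℓ t j (α + s) x :=
          hneB N ℓ hℓ t s hs i j α hα hα' x hx
        have d1 := pdx_B N ℓ hℓ t s hs j i α hα hα' x hne1
        rw [hβmod] at d1
        have d2 : pdx N i α.toNat (u N ℓ t s j β) x = 0 := by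
          refine pdx_C N ℓ t s i j β hβ hβ' x α.toNat (by omega) ?_
          rw [emod_eval ℓ (by omega) (β + s) (by omega) (by omega)]
          split_ifs <;> omega
        rw [d1, d2, mul_zero, sub_zero]
        have hEne : Real.exp (xc N ℓ t i α x) - Real.exp (xc N ℓ t j (α + s) x) ≠ 0 :=
          sub_ne_zero_of_ne fun h => hne1 (Real.exp_eq_exp.mp h)
        rcases h3 with h3 | h3 | h3
        · -- no wrap
          subst h3
          rcases hs with rfl | rfl
          · rw [if_neg (by omega : ¬(α = α + 1)), if_neg (by omega : ¬(α = α + 1)),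
              if_pos (by omega : α + 1 = α + 1 ∨ (α = (ℓ:ℤ) - 1 ∧ α + 1 = 0)),
              if_neg (by omega : ¬(α = α + 1 + 1 ∨ (α + 1 = (ℓ:ℤ) - 1 ∧ α = 0))),
              if_neg (by simp only [Prod.mk.injEq, not_and]; omega :
                ¬((α, α + 1) = ((0:ℤ), (ℓ:ℤ) - 1))),
              if_neg (by simp only [Prod.mk.injEq, not_and]; omega :
                ¬((α, α + 1) = ((ℓ:ℤ) - 1, (0:ℤ))))]
            simp only [Q]
            field_simp
            ring
          · rw [if_neg (by omega : ¬(α = α + -1)), if_neg (by omega : ¬(α = α + -1)),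
              if_neg (by omega : ¬(α + -1 = α + 1 ∨ (α = (ℓ:ℤ) - 1 ∧ α + -1 = 0))),
              if_pos (by omega : α = α + -1 + 1 ∨ (α + -1 = (ℓ:ℤ) - 1 ∧ α = 0)),
              if_neg (by simp only [Prod.mk.injEq, not_and]; omega :
                ¬((α, α + -1) = ((0:ℤ), (ℓ:ℤ) - 1))),
              if_neg (by simp only [Prod.mk.injEq, not_and]; omega :
                ¬((α, α + -1) = ((ℓ:ℤ) - 1, (0:ℤ))))]
            simp only [Q]
            field_simp
            ring
        · -- wrap with s = 1 : α = ℓ-1, β = 0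
          have hs1 : s = 1 := by omega
          subst hs1
          have hβ0 : β = 0 := by omega
          subst hβ0
          have hαv : α = (ℓ:ℤ) - 1 := by omega
          subst hαv
          rw [show (ℓ:ℤ) - 1 + 1 = (ℓ:ℤ) from by ring] at hEne ⊢
          rw [if_neg (by omega : ¬((ℓ:ℤ) - 1 = 0)), if_neg (by omega : ¬((ℓ:ℤ) - 1 = 0)),
            if_pos (by omega : (0:ℤ) = (ℓ:ℤ) ∨ ((ℓ:ℤ) - 1 = (ℓ:ℤ) - 1 ∧ (0:ℤ) = 0)),
            if_neg (by omega : ¬((ℓ:ℤ) - 1 = 0 + 1 ∨ ((0:ℤ) = (ℓ:ℤ) - 1 ∧ (ℓ:ℤ) - 1 = 0))),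
            if_neg (by simp only [Prod.mk.injEq, not_and]; omega :
              ¬(((ℓ:ℤ) - 1, (0:ℤ)) = ((0:ℤ), (ℓ:ℤ) - 1))),
            if_pos (rfl : (((ℓ:ℤ) - 1, (0:ℤ)) = ((ℓ:ℤ) - 1, (0:ℤ))))]
          simp only [Q]
          field_simp
          ring
        · -- wrap with s = -1 : α = 0, β = ℓ-1
          have hs1 : s = -1 := by omega
          subst hs1
          have hα0 : α = 0 := by omega
          subst hα0
          have hβv : β = (ℓ:ℤ) - 1 := by omega
          subst hβv
          rw [show (0:ℤ) + -1 = (-1:ℤ) from by ring] at hEne ⊢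
          have c1 : Real.exp (xc N ℓ t i (ℓ:ℤ) x) = t * Real.exp (xc N ℓ t i 0 x) := by
            rw [show ((ℓ:ℕ):ℤ) = (0:ℤ) + ℓ from by ring, xc_shift N ℓ (by omega) t,
              Real.exp_add, Real.exp_log ht]
            ring
          have c2 : Real.exp (xc N ℓ t j ((ℓ:ℤ) - 1) x) = t * Real.exp (xc N ℓ t j (-1) x) := by
            rw [show ((ℓ:ℤ) - 1) = (-1:ℤ) + ℓ from by ring, xc_shift N ℓ (by omega) t,
              Real.exp_add, Real.exp_log ht]
            ring
          have ht0 : t ≠ 0 := ne_of_gt ht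
          have hEt : t * Real.exp (xc N ℓ t i 0 x) - t * Real.exp (xc N ℓ t j (-1) x) ≠ 0 := by
            rw [show t * Real.exp (xc N ℓ t i 0 x) - t * Real.exp (xc N ℓ t j (-1) x)
              = t * (Real.exp (xc N ℓ t i 0 x) - Real.exp (xc N ℓ t j (-1) x)) from by ring]
            exact mul_ne_zero ht0 hEne
          rw [if_neg (by omega : ¬((0:ℤ) = (ℓ:ℤ) - 1)), if_neg (by omega : ¬((0:ℤ) = (ℓ:ℤ) - 1)),
            if_neg (by omega : ¬((ℓ:ℤ) - 1 = 0 + 1 ∨ ((0:ℤ) = (ℓ:ℤ) - 1 ∧ (ℓ:ℤ) - 1 = 0))),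
            if_pos (by omega : (0:ℤ) = (ℓ:ℤ) - 1 + 1 ∨ ((ℓ:ℤ) - 1 = (ℓ:ℤ) - 1 ∧ (0:ℤ) = 0)),
            if_pos (rfl : (((0:ℤ), (ℓ:ℤ) - 1) = ((0:ℤ), (ℓ:ℤ) - 1)))]
          simp only [Q]
          rw [c1, c2]
          field_simp
          ring
      · by_cases h4 : α = β + s ∨ α = β + s - ℓ ∨ α = β + s + ℓ
        · -- α ≡ β + s (mod ℓ)
          have hαmod : (β + s) % (ℓ:ℤ) = α := by
            rw [emod_eval ℓ (by omega) _ (by omega) (by omega)]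
            split_ifs <;> omega
          have hne2 : xc N ℓ t j β x ≠ xc N ℓ t i (β + s) x :=
            hneB N ℓ hℓ t s hs j i β hβ hβ' x hx
          have d2 := pdx_B N ℓ hℓ t s hs i j β hβ hβ' x hne2
          rw [hαmod] at d2
          have d1 : pdx N j β.toNat (u N ℓ t s i α) x = 0 := by
            refine pdx_C N ℓ t s j i α hα hα' x β.toNat (by omega) ?_
            rw [emod_eval ℓ (by omega) (α + s) (by omega) (by omega)]
            split_ifs <;> omega
          rw [d1, d2, zero_mul]
          have hEne : Real.exp (xc N ℓ t j β x) - Real.exp (xc N ℓ t i (β + s) x) ≠ 0 :=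
            sub_ne_zero_of_ne fun h => hne2 (Real.exp_eq_exp.mp h)
          have hEne' : Real.exp (xc N ℓ t i (β + s) x) - Real.exp (xc N ℓ t j β x) ≠ 0 :=
            sub_ne_zero_of_ne fun h => hne2 ((Real.exp_eq_exp.mp h).symm)
          rcases h4 with h4 | h4 | h4
          · -- no wrap
            subst h4
            rcases hs with rfl | rfl
            · rw [if_neg (by omega : ¬(β + 1 = β)), if_neg (by omega : ¬(β + 1 = β)),
                if_neg (by omega : ¬(β = β + 1 + 1 ∨ (β + 1 = (ℓ:ℤ) - 1 ∧ β = 0))),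
                if_pos (by omega : β + 1 = β + 1 ∨ (β = (ℓ:ℤ) - 1 ∧ β + 1 = 0)),
                if_neg (by simp only [Prod.mk.injEq, not_and]; omega :
                  ¬((β + 1, β) = ((0:ℤ), (ℓ:ℤ) - 1))),
                if_neg (by simp only [Prod.mk.injEq, not_and]; omega :
                  ¬((β + 1, β) = ((ℓ:ℤ) - 1, (0:ℤ))))]
              simp only [Q]
              field_simp
              ring
            · rw [if_neg (by omega : ¬(β + -1 = β)), if_neg (by omega : ¬(β + -1 = β)),
                if_pos (by omega : β = β + -1 + 1 ∨ (β + -1 = (ℓ:ℤ) - 1 ∧ β = 0)),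
                if_neg (by omega : ¬(β + -1 = β + 1 ∨ (β = (ℓ:ℤ) - 1 ∧ β + -1 = 0))),
                if_neg (by simp only [Prod.mk.injEq, not_and]; omega :
                  ¬((β + -1, β) = ((0:ℤ), (ℓ:ℤ) - 1))),
                if_neg (by simp only [Prod.mk.injEq, not_and]; omega :
                  ¬((β + -1, β) = ((ℓ:ℤ) - 1, (0:ℤ))))]
              simp only [Q]
              field_simp
              ring
          · -- wrap with s = 1 : β = ℓ-1, α = 0
            have hs1 : s = 1 := by omega
            subst hs1
            have hα0 : α = 0 := by omega
            subst hα0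
            have hβv : β = (ℓ:ℤ) - 1 := by omega
            subst hβv
            rw [show (ℓ:ℤ) - 1 + 1 = (ℓ:ℤ) from by ring] at hEne hEne' ⊢
            rw [if_neg (by omega : ¬((0:ℤ) = (ℓ:ℤ) - 1)),
              if_neg (by omega : ¬((0:ℤ) = (ℓ:ℤ) - 1)),
              if_neg (by omega : ¬((ℓ:ℤ) - 1 = 0 + 1 ∨ ((0:ℤ) = (ℓ:ℤ) - 1 ∧ (ℓ:ℤ) - 1 = 0))),
              if_pos (by omega : (0:ℤ) = (ℓ:ℤ) ∨ ((ℓ:ℤ) - 1 = (ℓ:ℤ) - 1 ∧ (0:ℤ) = 0)),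
              if_pos (rfl : (((0:ℤ), (ℓ:ℤ) - 1) = ((0:ℤ), (ℓ:ℤ) - 1)))]
            simp only [Q]
            field_simp
            ring
          · -- wrap with s = -1 : β = 0, α = ℓ-1
            have hs1 : s = -1 := by omega
            subst hs1
            have hβ0 : β = 0 := by omega
            subst hβ0
            have hαv : α = (ℓ:ℤ) - 1 := by omega
            subst hαv
            rw [show (0:ℤ) + -1 = (-1:ℤ) from by ring] at hEne hEne' ⊢
            rw [if_neg (by omega : ¬((ℓ:ℤ) - 1 = 0)), if_neg (by omega : ¬((ℓ:ℤ) - 1 = 0)),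
              if_pos (by omega : (0:ℤ) = (ℓ:ℤ) - 1 + 1 ∨ ((ℓ:ℤ) - 1 = (ℓ:ℤ) - 1 ∧ (0:ℤ) = 0)),
              if_neg (by omega : ¬((ℓ:ℤ) - 1 = 0 + 1 ∨ ((0:ℤ) = (ℓ:ℤ) - 1 ∧ (ℓ:ℤ) - 1 = 0))),
              if_neg (by simp only [Prod.mk.injEq, not_and]; omega :
                ¬(((ℓ:ℤ) - 1, (0:ℤ)) = ((0:ℤ), (ℓ:ℤ) - 1))),
              if_pos (rfl : (((ℓ:ℤ) - 1, (0:ℤ)) = ((ℓ:ℤ) - 1, (0:ℤ))))]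
            have c1 : Real.exp (xc N ℓ t j (ℓ:ℤ) x) = t * Real.exp (xc N ℓ t j 0 x) := by
              rw [show ((ℓ:ℕ):ℤ) = (0:ℤ) + ℓ from by ring, xc_shift N ℓ (by omega) t,
                Real.exp_add, Real.exp_log ht]
              ring
            have c2 : Real.exp (xc N ℓ t i ((ℓ:ℤ) - 1) x) = t * Real.exp (xc N ℓ t i (-1) x) := by
              rw [show ((ℓ:ℤ) - 1) = (-1:ℤ) + ℓ from by ring, xc_shift N ℓ (by omega) t,
                Real.exp_add, Real.exp_log ht]
              ring
            have ht0 : t ≠ 0 := ne_of_gt ht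
            have hEt : t * Real.exp (xc N ℓ t i (-1) x) - t * Real.exp (xc N ℓ t j 0 x) ≠ 0 := by
              rw [show t * Real.exp (xc N ℓ t i (-1) x) - t * Real.exp (xc N ℓ t j 0 x)
                = t * (Real.exp (xc N ℓ t i (-1) x) - Real.exp (xc N ℓ t j 0 x)) from by ring]
              exact mul_ne_zero ht0 hEne'
            simp only [Q]
            rw [c1, c2]
            field_simp
            ring
        · -- non-adjacent: everything vanishes
          have d1 : pdx N j β.toNat (u N ℓ t s i α) x = 0 := by
            refine pdx_C N ℓ t s j i α hα hα' x β.toNat (by omega) ?_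
            rw [emod_eval ℓ (by omega) (α + s) (by omega) (by omega)]
            split_ifs <;> omega
          have d2 : pdx N i α.toNat (u N ℓ t s j β) x = 0 := by
            refine pdx_C N ℓ t s i j β hβ hβ' x α.toNat (by omega) ?_
            rw [emod_eval ℓ (by omega) (β + s) (by omega) (by omega)]
            split_ifs <;> omega
          rw [d1, d2, zero_mul, mul_zero, sub_zero,
            if_neg hab, if_neg hab,
            if_neg (by omega : ¬(β = α + 1 ∨ (α = (ℓ:ℤ) - 1 ∧ β = 0))),
            if_neg (by omega : ¬(α = β + 1 ∨ (β = (ℓ:ℤ) - 1 ∧ α = 0))),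
            if_neg (by simp only [Prod.mk.injEq, not_and]; omega :
              ¬((α, β) = ((0:ℤ), (ℓ:ℤ) - 1))),
            if_neg (by simp only [Prod.mk.injEq, not_and]; omega :
              ¬((α, β) = ((ℓ:ℤ) - 1, (0:ℤ))))]
          ring

end SpinRSK
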